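/- Let 𝒜 be an a.d.-family. The following are equivalent: (1) ℙ_𝒜 is σ-centered; (2) for every 0 < ε < 1 the unit sphere of (X_𝒜, ‖·‖∞) is the union of countably many sets 𝒳_n such that ‖x − y‖∞ ≤ 1+ε for all x, y ∈ 𝒳_n and all n ∈ ℕ. -/

import Mathlib

open Set Filter Cardinal

noncomputable section

/-- The Banach space `ℓ∞` of bounded real sequences with the sup norm. -/
abbrev Linfty : Type := lp (fun _ : ℕ => ℝ) ⊤

/-- An a.d.-family: an uncountable family of infinite subsets of `ℕ` which is
pairwise almost disjoint. -/
def ADFamily (𝒜 : Set (Set ℕ)) : Prop :=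
  ¬𝒜.Countable ∧ (∀ A ∈ 𝒜, A.Infinite) ∧
    ∀ A ∈ 𝒜, ∀ B ∈ 𝒜, A ≠ B → (A ∩ B).Finite

/-- A maximal a.d.-family. -/
def MaximalADFamily (𝒜 : Set (Set ℕ)) : Prop :=
  ADFamily 𝒜 ∧ ∀ X : Set ℕ, X.Infinite → ∃ A ∈ 𝒜, (X ∩ A).Infinite

/-- `A =* B` : the symmetric difference is finite. -/
def eqStar (A B : Set ℕ) : Prop := (symmDiff A B).Finite

/-- Finite subfamilies `a`, `b` of `𝒜` represent the pair `p`. -/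
def Represents (𝒜 : Set (Set ℕ)) (p : Set ℕ × Set ℕ) (a b : Finset (Set ℕ)) : Prop :=
  ↑a ⊆ 𝒜 ∧ ↑b ⊆ 𝒜 ∧ eqStar p.1 (⋃ A ∈ a, A) ∧ eqStar p.2 (⋃ B ∈ b, B)

/-- `p` is a condition of the splitting partial order `ℙ_𝒜`. -/
def SplitCond (𝒜 : Set (Set ℕ)) (p : Set ℕ × Set ℕ) : Prop :=
  p.1 ∩ p.2 = ∅ ∧ ∃ a b : Finset (Set ℕ), Represents 𝒜 p a b

/-- `Extends p q` means `p ≤ q` in `ℙ_𝒜`. -/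
def Extends (p q : Set ℕ × Set ℕ) : Prop := q.1 ⊆ p.1 ∧ q.2 ⊆ p.2

/-- Compatibility in `ℙ_𝒜`. -/
def Compat (𝒜 : Set (Set ℕ)) (p q : Set ℕ × Set ℕ) : Prop :=
  ∃ r, SplitCond 𝒜 r ∧ Extends r p ∧ Extends r q

/-- An antichain of `ℙ_𝒜`: a set of pairwise incompatible conditions. -/
def SplitAntichain (𝒜 : Set (Set ℕ)) (P : Set (Set ℕ × Set ℕ)) : Prop :=
  (∀ p ∈ P, SplitCond 𝒜 p) ∧ ∀ p ∈ P, ∀ q ∈ P, p ≠ q → ¬Compat 𝒜 p q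

/-- `ℙ_𝒜` satisfies the countable chain condition. -/
def SplitCCC (𝒜 : Set (Set ℕ)) : Prop :=
  ∀ P : Set (Set ℕ × Set ℕ), SplitAntichain 𝒜 P → P.Countable

/-- A centered subset of `ℙ_𝒜`: every finite subset has a common lower bound in `ℙ_𝒜`. -/
def SplitCentered (𝒜 : Set (Set ℕ)) (P : Set (Set ℕ × Set ℕ)) : Prop :=
  ∀ F : Finset (Set ℕ × Set ℕ), ↑F ⊆ P →
    ∃ r, SplitCond 𝒜 r ∧ ∀ p ∈ F, Extends r p

/-- `ℙ_𝒜` is σ-centered. -/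
def SplitSigmaCentered (𝒜 : Set (Set ℕ)) : Prop :=
  ∃ P : ℕ → Set (Set ℕ × Set ℕ),
    (⋃ n, P n) = {p | SplitCond 𝒜 p} ∧ ∀ n, SplitCentered 𝒜 (P n)

/-- `ℙ_𝒜` has precaliber `κ`. -/
def SplitPrecaliber (𝒜 : Set (Set ℕ)) (κ : Cardinal) : Prop :=
  ∀ P : Set (Set ℕ × Set ℕ), (∀ p ∈ P, SplitCond 𝒜 p) → #P = κ →
    ∃ Q ⊆ P, #Q = κ ∧ SplitCentered 𝒜 Q

/-- Two conditions are essentially distinct if their (uniquely determined)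
representing finite subfamilies differ on both coordinates. -/
def EssDistinct (𝒜 : Set (Set ℕ)) (p q : Set ℕ × Set ℕ) : Prop :=
  ∀ ap bp aq bq : Finset (Set ℕ), Represents 𝒜 p ap bp → Represents 𝒜 q aq bq →
    ap ≠ aq ∧ bp ≠ bq

/-- An antiramsey a.d.-family. -/
def Antiramsey (𝒜 : Set (Set ℕ)) : Prop :=
  ADFamily 𝒜 ∧
  ∀ P : Set (Set ℕ × Set ℕ), (∀ p ∈ P, SplitCond 𝒜 p) → ¬P.Countable →
    (∀ p ∈ P, ∀ q ∈ P, p ≠ q → EssDistinct 𝒜 p q) →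
    (∃ p ∈ P, ∃ q ∈ P, p ≠ q ∧ Compat 𝒜 p q) ∧ (∃ p ∈ P, ∃ q ∈ P, ¬Compat 𝒜 p q)

/-- The first uncountable ordinal. -/
def omega1 : Ordinal.{0} := (Cardinal.aleph 1).ord

/-- A Luzin family. -/
def IsLuzinFamily (𝒜 : Set (Set ℕ)) : Prop :=
  ADFamily 𝒜 ∧ ∃ A : Ordinal.{0} → Set ℕ,
    (∀ ξ < omega1, A ξ ∈ 𝒜) ∧
    (∀ B ∈ 𝒜, ∃ ξ < omega1, A ξ = B) ∧
    (∀ ξ < omega1, ∀ η < omega1, ξ ≠ η → A ξ ≠ A η) ∧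
    ∀ η < omega1, ∀ m : ℕ, {ξ : Ordinal | ξ < η ∧ sSup (A ξ ∩ A η) = m}.Finite

/-- `(B i : i < n)` forms an `n`-Luzin gap. -/
def IsNLuzinGap (n : ℕ) (B : Fin n → Ordinal.{0} → Set ℕ) : Prop :=
  (∀ i : Fin n, ∀ α < omega1, ∀ β < omega1, α ≠ β → B i α ≠ B i β) ∧
  (∀ i j : Fin n, i ≠ j → ∀ α < omega1, ∀ β < omega1, B i α ≠ B j β) ∧
  ∃ m : ℕ,
    (∀ i j : Fin n, i < j → ∀ α < omega1, B i α ∩ B j α ⊆ Set.Iio m) ∧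
    (∀ α < omega1, ∀ β < omega1, α ≠ β →
      ¬(⋃ (i : Fin n) (j : Fin n) (_ : i ≠ j), B i α ∩ B j β) ⊆ Set.Iio m)

/-- `𝒜` contains an `n`-Luzin gap. -/
def ContainsNLuzinGap (𝒜 : Set (Set ℕ)) (n : ℕ) : Prop :=
  ∃ B : Fin n → Ordinal.{0} → Set ℕ,
    (∀ i : Fin n, ∀ α < omega1, B i α ∈ 𝒜) ∧ IsNLuzinGap n B

-- The characteristic function of `A ⊆ ℕ` as an element of `ℓ∞`.
open Classical in
def indicatorLinfty (A : Set ℕ) : Linfty :=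
  ⟨fun n => if n ∈ A then (1 : ℝ) else 0, by
    apply memℓp_infty
    refine ⟨1, ?_⟩
    rintro x ⟨n, rfl⟩
    dsimp only
    split <;> simp⟩

/-- The subset `c₀` of `ℓ∞`. -/
def c0Set : Set Linfty := {f | Tendsto (fun n => f n) atTop (nhds 0)}

/-- The Johnson–Lindenstrauss space `X_𝒜`: the closed linear span of
`c₀ ∪ {1_A : A ∈ 𝒜}` in `ℓ∞`, as a (closed) submodule. -/
def XA (𝒜 : Set (Set ℕ)) : Submodule ℝ Linfty :=
  (Submodule.span ℝ (c0Set ∪ indicatorLinfty '' 𝒜)).topologicalClosure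

/-- The norm `‖·‖_{∞,2}` on `ℓ∞`. -/
def norm12 (f : Linfty) : ℝ :=
  ‖f‖ + Real.sqrt (∑' n : ℕ, (f n) ^ 2 / 2 ^ (n + 1))

/-- The unit sphere of `(X_𝒜, ‖·‖∞)`. -/
def sphereInf (𝒜 : Set (Set ℕ)) : Set Linfty :=
  {f : Linfty | f ∈ XA 𝒜 ∧ ‖f‖ = 1}

/-- The unit sphere of `(X_𝒜, ‖·‖_{∞,2})`. -/
def sphere12 (𝒜 : Set (Set ℕ)) : Set Linfty :=
  {f : Linfty | f ∈ XA 𝒜 ∧ norm12 f = 1}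

/-- The Open Coloring Axiom. -/
def OCA : Prop :=
  ∀ (X : Type) [MetricSpace X], TopologicalSpace.SeparableSpace X →
    ∀ K : Set (X × X), IsOpen K → (∀ x y : X, (x, y) ∈ K → (y, x) ∈ K) →
      (∃ Y : Set X, ¬Y.Countable ∧ ∀ x ∈ Y, ∀ y ∈ Y, x ≠ y → (x, y) ∈ K) ∨
      (∃ C : ℕ → Set X, (⋃ n, C n) = Set.univ ∧
        ∀ n, ∀ x ∈ C n, ∀ y ∈ C n, x ≠ y → (x, y) ∉ K)

/-- An `ℝ`-embeddable a.d.-family. -/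
def REmbeddable (𝒜 : Set (Set ℕ)) : Prop :=
  ∃ (f : ℕ → ℚ) (r : Set ℕ → ℝ), Function.Injective f ∧
    (∀ A ∈ 𝒜, Irrational (r A) ∧
      ∀ ε : ℝ, 0 < ε → {n ∈ A | ε ≤ |(f n : ℝ) - r A|}.Finite) ∧
    (∀ A ∈ 𝒜, ∀ B ∈ 𝒜, A ≠ B → r A ≠ r B)

/-- The Continuum Hypothesis. -/
def CH : Prop := (Cardinal.continuum : Cardinal.{0}) = Cardinal.aleph 1

end
set_option synthInstance.maxHeartbeats 1000000
set_option maxHeartbeats 1000000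
open Classical

section Aux

lemma s16_coord_abs_le (f : Linfty) (m : ℕ) : |f m| ≤ ‖f‖ := by
  simpa [Real.norm_eq_abs] using lp.norm_apply_le_norm ENNReal.top_ne_zero f m

lemma s16_norm_le_coords {f : Linfty} {C : ℝ} (hC : 0 ≤ C) (h : ∀ m, |f m| ≤ C) : ‖f‖ ≤ C :=
  lp.norm_le_of_forall_le hC (by simpa [Real.norm_eq_abs] using h)

lemma s16_indicator_apply (A : Set ℕ) (m : ℕ) :
    indicatorLinfty A m = if m ∈ A then (1:ℝ) else 0 := rfl

lemma s16_mem_c0 {f : Linfty} {E : Set ℕ} (hE : E.Finite) (h : ∀ m ∉ E, f m = 0) :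
    f ∈ c0Set := by
  have hev : ∀ᶠ m in atTop, (f : ℕ → ℝ) m = 0 := by
    rw [← Nat.cofinite_eq_atTop]
    exact hE.eventually_cofinite_notMem.mono h
  exact Tendsto.congr' (by filter_upwards [hev] with m hm using hm.symm) tendsto_const_nhds

lemma s16_symmDiff_biUnion {ι : Type*} (s : Finset ι) (f g : ι → Set ℕ) :
    symmDiff (⋃ i ∈ s, f i) (⋃ i ∈ s, g i) ⊆ ⋃ i ∈ s, symmDiff (f i) (g i) := by
  intro m hm
  rw [Set.mem_symmDiff] at hm
  rcases hm with ⟨h1, h2⟩ | ⟨h1, h2⟩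
  · simp only [Set.mem_iUnion] at h1 h2 ⊢
    obtain ⟨i, hi, hmi⟩ := h1
    exact ⟨i, hi, Set.mem_symmDiff.2 (Or.inl ⟨hmi, fun hg => h2 ⟨i, hi, hg⟩⟩)⟩
  · simp only [Set.mem_iUnion] at h1 h2 ⊢
    obtain ⟨i, hi, hmi⟩ := h1
    exact ⟨i, hi, Set.mem_symmDiff.2 (Or.inr ⟨hmi, fun hg => h2 ⟨i, hi, hg⟩⟩)⟩

lemma s16_sum_indicator_apply (a : Finset (Set ℕ)) (m : ℕ) :
    (∑ B ∈ a, indicatorLinfty B) m = ∑ B ∈ a, (if m ∈ B then (1:ℝ) else 0) := by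
  induction a using Finset.induction_on with
  | empty => simp [lp.coeFn_zero]
  | insert _ _ h ih =>
    rw [Finset.sum_insert h, Finset.sum_insert h, ← ih]
    simp [lp.coeFn_add, s16_indicator_apply]

end Aux

/-- Overlap set of a finite family: points in two distinct members. -/
def s16Ov (a : Finset (Set ℕ)) : Set ℕ :=
  {m | ∃ B ∈ a, ∃ B' ∈ a, B ≠ B' ∧ m ∈ B ∧ m ∈ B'}

lemma s16_ov_finite {𝒜 : Set (Set ℕ)} (h𝒜 : ADFamily 𝒜) {a : Finset (Set ℕ)}
    (ha : ↑a ⊆ 𝒜) : (s16Ov a).Finite := by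
  have hsub : s16Ov a ⊆ ⋃ B ∈ (a : Set (Set ℕ)), ⋃ B' ∈ (a : Set (Set ℕ)),
      (if B = B' then (∅ : Set ℕ) else B ∩ B') := by
    rintro m ⟨B, hB, B', hB', hne, hmB, hmB'⟩
    simp only [Set.mem_iUnion]
    exact ⟨B, hB, B', hB', by simp [if_neg hne, hmB, hmB']⟩
  refine Set.Finite.subset ?_ hsub
  refine (a.finite_toSet).biUnion fun B hB => (a.finite_toSet).biUnion fun B' hB' => ?_
  split
  · exact Set.finite_empty
  · exact h𝒜.2.2 B (ha hB) B' (ha hB') (by assumption)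

lemma s16_sum_unique {a : Finset (Set ℕ)} {m : ℕ} {B₀ : Set ℕ} (hB₀ : B₀ ∈ a) (hm : m ∈ B₀)
    (hov : ∀ B ∈ a, B ≠ B₀ → m ∉ B) :
    ∑ B ∈ a, (if m ∈ B then (1:ℝ) else 0) = 1 := by
  rw [Finset.sum_eq_single_of_mem B₀ hB₀ (fun B hB hne => if_neg (hov B hB hne))]
  exact if_pos hm

lemma s16_splitCond_empty (𝒜 : Set (Set ℕ)) : SplitCond 𝒜 (∅, ∅) := by
  refine ⟨by simp, ∅, ∅, ?_⟩
  simp [Represents, eqStar]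

lemma s16_indicator_mem_XA {𝒜 : Set (Set ℕ)} (h𝒜 : ADFamily 𝒜) {A : Set ℕ}
    {a : Finset (Set ℕ)} (ha : ↑a ⊆ 𝒜) (he : eqStar A (⋃ B ∈ a, B)) :
    indicatorLinfty A ∈ XA 𝒜 := by
  set y : Linfty := ∑ B ∈ a, indicatorLinfty B with hy
  have hspan : y ∈ Submodule.span ℝ (c0Set ∪ indicatorLinfty '' 𝒜) :=
    Submodule.sum_mem _ fun B hB => Submodule.subset_span (Or.inr ⟨B, ha hB, rfl⟩)
  have hc : indicatorLinfty A - y ∈ c0Set := by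
    refine s16_mem_c0 (E := symmDiff A (⋃ B ∈ a, B) ∪ s16Ov a)
      (he.union (s16_ov_finite h𝒜 ha)) ?_
    intro m hm
    have hm1 : m ∉ symmDiff A (⋃ B ∈ a, B) := fun h => hm (Or.inl h)
    have hm2 : m ∉ s16Ov a := fun h => hm (Or.inr h)
    rw [Set.mem_symmDiff] at hm1
    push_neg at hm1
    have hcoord : (indicatorLinfty A - y) m = (indicatorLinfty A) m - y m := by
      rw [lp.coeFn_sub]; rfl
    rw [hcoord, hy, s16_sum_indicator_apply, s16_indicator_apply]
    by_cases hA : m ∈ A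
    · have hU : m ∈ ⋃ B ∈ a, B := hm1.1 hA
      simp only [Set.mem_iUnion] at hU
      obtain ⟨B₀, hB₀, hmB₀⟩ := hU
      rw [if_pos hA, s16_sum_unique hB₀ hmB₀ (fun B hB hne hmB =>
        hm2 ⟨B, hB, B₀, hB₀, hne, hmB, hmB₀⟩)]
      ring
    · have hU : m ∉ ⋃ B ∈ a, B := fun h => hA (hm1.2 h)
      simp only [Set.mem_iUnion] at hU
      push_neg at hU
      rw [if_neg hA, Finset.sum_eq_zero (fun B hB => if_neg (hU B hB))]
      ring
  have : indicatorLinfty A ∈ Submodule.span ℝ (c0Set ∪ indicatorLinfty '' 𝒜) := by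
    have : indicatorLinfty A = (indicatorLinfty A - y) + y := by ring
    rw [this]
    exact Submodule.add_mem _ (Submodule.subset_span (Or.inl hc)) hspan
  exact Submodule.le_topologicalClosure _ this

lemma s16_v_apply (A B : Set ℕ) (m : ℕ) :
    (indicatorLinfty A - indicatorLinfty B) m
      = (if m ∈ A then (1:ℝ) else 0) - (if m ∈ B then (1:ℝ) else 0) := by
  have h := lp.coeFn_sub (indicatorLinfty A) (indicatorLinfty B)
  calc (indicatorLinfty A - indicatorLinfty B) m
      = ((indicatorLinfty A : ℕ → ℝ) - (indicatorLinfty B : ℕ → ℝ)) m := by rw [h]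
    _ = _ := by simp [s16_indicator_apply]

lemma s16_v_norm {A B : Set ℕ} (hd : A ∩ B = ∅) (hne : A.Nonempty ∨ B.Nonempty) :
    ‖indicatorLinfty A - indicatorLinfty B‖ = 1 := by
  refine le_antisymm (s16_norm_le_coords zero_le_one fun m => ?_) ?_
  · rw [s16_v_apply]
    split <;> split <;> norm_num
  · rcases hne with ⟨m, hm⟩ | ⟨m, hm⟩
    · have hB : m ∉ B := fun h => by
        have hmem : m ∈ A ∩ B := ⟨hm, h⟩
        rw [hd] at hmem; exact hmem
      have : |(indicatorLinfty A - indicatorLinfty B) m| = 1 := by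
        rw [s16_v_apply, if_pos hm, if_neg hB]; norm_num
      calc (1:ℝ) = |(indicatorLinfty A - indicatorLinfty B) m| := this.symm
        _ ≤ _ := s16_coord_abs_le _ m
    · have hA : m ∉ A := fun h => by
        have hmem : m ∈ A ∩ B := ⟨h, hm⟩
        rw [hd] at hmem; exact hmem
      have : |(indicatorLinfty A - indicatorLinfty B) m| = 1 := by
        rw [s16_v_apply, if_neg hA, if_pos hm]; norm_num
      calc (1:ℝ) = |(indicatorLinfty A - indicatorLinfty B) m| := this.symm
        _ ≤ _ := s16_coord_abs_le _ m

/-- A choice of representing families for a condition. -/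
noncomputable def s16ch (𝒜 : Set (Set ℕ)) (p : Set ℕ × Set ℕ) :
    Finset (Set ℕ) × Finset (Set ℕ) :=
  if h : ∃ a b, Represents 𝒜 p a b then (h.choose, h.choose_spec.choose) else (∅, ∅)

lemma s16ch_spec {𝒜 : Set (Set ℕ)} {p : Set ℕ × Set ℕ} (hp : SplitCond 𝒜 p) :
    Represents 𝒜 p (s16ch 𝒜 p).1 (s16ch 𝒜 p).2 := by
  rw [s16ch, dif_pos hp.2]
  exact hp.2.choose_spec.choose_spec

def s16P (𝒜 : Set (Set ℕ)) (X : ℕ → Set Linfty) : ℕ → Set (Set ℕ × Set ℕ)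
  | 0 => {q | q = (∅, ∅)}
  | (n+1) => {q | SplitCond 𝒜 q ∧ (indicatorLinfty q.1 - indicatorLinfty q.2) ∈ X n}

lemma s16_backward {𝒜 : Set (Set ℕ)} (h𝒜 : ADFamily 𝒜) (X : ℕ → Set Linfty)
    (hX1 : sphereInf 𝒜 = ⋃ n, X n)
    (hX2 : ∀ n, ∀ x ∈ X n, ∀ y ∈ X n, ‖x - y‖ ≤ 1 + 2⁻¹) :
    SplitSigmaCentered 𝒜 := by
  refine ⟨s16P 𝒜 X, ?_, ?_⟩
  · ext q
    simp only [Set.mem_iUnion, Set.mem_setOf_eq]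
    constructor
    · rintro ⟨n, hn⟩
      match n, hn with
      | 0, hn => exact hn ▸ s16_splitCond_empty 𝒜
      | (n+1), hn => exact hn.1
    · intro hq
      by_cases h0 : q = (∅, ∅)
      · exact ⟨0, h0⟩
      · have hsph : (indicatorLinfty q.1 - indicatorLinfty q.2) ∈ sphereInf 𝒜 := by
          obtain ⟨hdisj, a, b, ha, hb, hea, heb⟩ := hq
          refine ⟨Submodule.sub_mem _ (s16_indicator_mem_XA h𝒜 ha hea)
            (s16_indicator_mem_XA h𝒜 hb heb), ?_⟩
          refine s16_v_norm hdisj ?_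
          by_contra hcon
          push_neg at hcon
          exact h0 (Prod.ext hcon.1 hcon.2)
        rw [hX1] at hsph
        obtain ⟨n, hn⟩ := Set.mem_iUnion.1 hsph
        exact ⟨n + 1, hq, hn⟩
  · intro n
    match n with
    | 0 =>
      intro F hF
      refine ⟨(∅, ∅), s16_splitCond_empty 𝒜, fun p hp => ?_⟩
      have : p = (∅, ∅) := hF hp
      rw [this]
      exact ⟨subset_rfl, subset_rfl⟩
    | (n+1) =>
      intro F hF
      refine ⟨(⋃ p ∈ F, p.1, ⋃ p ∈ F, p.2), ⟨?_, ?_⟩, fun p hp => ?_⟩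
      · ext m
        simp only [Set.mem_inter_iff, Set.mem_iUnion, Set.mem_empty_iff_false, iff_false]
        rintro ⟨⟨p, hp, hm1⟩, ⟨p', hp', hm2⟩⟩
        have h1 := hF hp
        have h2 := hF hp'
        have hb := hX2 n _ h1.2 _ h2.2
        have hm1' : m ∉ p.2 := fun h => by
          have hmem : m ∈ p.1 ∩ p.2 := ⟨hm1, h⟩
          rw [h1.1.1] at hmem; exact hmem
        have hm2' : m ∉ p'.1 := fun h => by
          have hmem : m ∈ p'.1 ∩ p'.2 := ⟨h, hm2⟩
          rw [h2.1.1] at hmem; exact hmem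
        have hc : |((indicatorLinfty p.1 - indicatorLinfty p.2)
            - (indicatorLinfty p'.1 - indicatorLinfty p'.2)) m| = 2 := by
          have hsub := lp.coeFn_sub (indicatorLinfty p.1 - indicatorLinfty p.2)
            (indicatorLinfty p'.1 - indicatorLinfty p'.2)
          calc |((indicatorLinfty p.1 - indicatorLinfty p.2)
              - (indicatorLinfty p'.1 - indicatorLinfty p'.2)) m|
              = |(indicatorLinfty p.1 - indicatorLinfty p.2) m
                - (indicatorLinfty p'.1 - indicatorLinfty p'.2) m| := by rw [hsub]; rfl
            _ = 2 := by
                rw [s16_v_apply, s16_v_apply, if_pos hm1, if_neg hm1', if_neg hm2', if_pos hm2]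
                norm_num
        have := (hc ▸ s16_coord_abs_le ((indicatorLinfty p.1 - indicatorLinfty p.2)
          - (indicatorLinfty p'.1 - indicatorLinfty p'.2)) m).trans hb
        norm_num at this
      · refine ⟨F.biUnion (fun p => (s16ch 𝒜 p).1), F.biUnion (fun p => (s16ch 𝒜 p).2), ?_, ?_, ?_, ?_⟩
        · intro A hA
          simp only [Finset.coe_biUnion, Set.mem_iUnion] at hA
          obtain ⟨p, hp, hAp⟩ := hA
          exact (s16ch_spec (hF hp).1).1 hAp
        · intro A hA
          simp only [Finset.coe_biUnion, Set.mem_iUnion] at hA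
          obtain ⟨p, hp, hAp⟩ := hA
          exact (s16ch_spec (hF hp).1).2.1 hAp
        · rw [Finset.set_biUnion_biUnion]
          refine Set.Finite.subset ?_ (s16_symmDiff_biUnion F _ _)
          exact Set.Finite.biUnion F.finite_toSet fun p hp => (s16ch_spec (hF hp).1).2.2.1
        · rw [Finset.set_biUnion_biUnion]
          refine Set.Finite.subset ?_ (s16_symmDiff_biUnion F _ _)
          exact Set.Finite.biUnion F.finite_toSet fun p hp => (s16ch_spec (hF hp).1).2.2.2
      · exact ⟨Set.subset_biUnion_of_mem (u := fun p => p.1) hp,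
          Set.subset_biUnion_of_mem (u := fun p => p.2) hp⟩

/-- `c₀` as a submodule. -/
noncomputable def s16c0 : Submodule ℝ Linfty where
  carrier := c0Set
  zero_mem' := by
    have : ∀ m : ℕ, (0 : Linfty) m = 0 := fun m => by rw [lp.coeFn_zero]; rfl
    simp [c0Set, funext this]
  add_mem' := by
    intro f g hf hg
    have : Tendsto (fun m => f m + g m) atTop (nhds (0 + 0)) := Tendsto.add hf hg
    simp only [add_zero] at this
    refine Tendsto.congr (fun m => ?_) this
    rw [lp.coeFn_add]; rfl
  smul_mem' := by
    intro r f hf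
    have : Tendsto (fun m => r * f m) atTop (nhds (r * 0)) := Tendsto.const_mul r hf
    simp only [mul_zero] at this
    refine Tendsto.congr (fun m => ?_) this
    rw [lp.coeFn_smul]; simp

def S16Good (𝒜 : Set (Set ℕ)) (P : ℕ → Set (Set ℕ × Set ℕ)) (ε : ℝ) (x : Linfty)
    (d : ℕ × List (ℕ × ℚ)) : Prop :=
  ∃ F G : Set ℕ, SplitCond 𝒜 (F, G) ∧ (F, G) ∈ P d.1 ∧
    (∀ mq ∈ d.2, |x mq.1 - (mq.2 : ℝ)| ≤ ε/8) ∧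
    ∀ m : ℕ, m ∉ d.2.map Prod.fst →
      (3*ε/4 < x m → m ∈ F) ∧ (x m < -(3*ε/4) → m ∈ G)

lemma s16_close {𝒜 : Set (Set ℕ)} {P : ℕ → Set (Set ℕ × Set ℕ)}
    (hP2 : ∀ n, SplitCentered 𝒜 (P n)) {ε : ℝ} (hε : 0 < ε) {x y : Linfty}
    (hx : ‖x‖ = 1) (hy : ‖y‖ = 1) {d : ℕ × List (ℕ × ℚ)}
    (h1 : S16Good 𝒜 P ε x d) (h2 : S16Good 𝒜 P ε y d) : ‖x - y‖ ≤ 1 + ε := by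
  obtain ⟨F, G, hFG, hFGP, hl1, hth1⟩ := h1
  obtain ⟨F', G', hFG', hFGP', hl2, hth2⟩ := h2
  obtain ⟨r, hr, hre⟩ := hP2 d.1 ({(F, G), (F', G')} : Finset (Set ℕ × Set ℕ)) (by
    intro p hp
    simp only [Finset.coe_insert, Finset.coe_singleton, Set.mem_insert_iff,
      Set.mem_singleton_iff] at hp
    rcases hp with rfl | rfl
    · exact hFGP
    · exact hFGP')
  have he1 := hre (F, G) (Finset.mem_insert_self _ _)
  have he2 := hre (F', G') (Finset.mem_insert_of_mem (Finset.mem_singleton_self _))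
  refine s16_norm_le_coords (by linarith) fun m => ?_
  have hsub : (x - y) m = x m - y m := by rw [lp.coeFn_sub]; rfl
  rw [hsub]
  by_cases hm : m ∈ d.2.map Prod.fst
  · obtain ⟨mq, hmq, hfst⟩ := List.mem_map.1 hm
    have b1 := hl1 mq hmq
    have b2 := hl2 mq hmq
    rw [hfst] at b1 b2
    rw [abs_le] at b1 b2 ⊢
    constructor <;> linarith [b1.1, b1.2, b2.1, b2.2]
  · have hx1 : |x m| ≤ 1 := hx ▸ s16_coord_abs_le x m
    have hy1 : |y m| ≤ 1 := hy ▸ s16_coord_abs_le y m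
    rw [abs_le] at hx1 hy1 ⊢
    constructor
    · -- y m - x m ≤ 1 + ε, i.e. -(1+ε) ≤ x m - y m
      by_contra hcon
      push_neg at hcon
      have hyb : 3*ε/4 < y m := by linarith
      have hxb : x m < -(3*ε/4) := by linarith
      have hmF' : m ∈ F' := (hth2 m hm).1 hyb
      have hmG : m ∈ G := (hth1 m hm).2 hxb
      have : m ∈ r.1 ∩ r.2 := ⟨he2.1 hmF', he1.2 hmG⟩
      rw [hr.1] at this
      exact this
    · by_contra hcon
      push_neg at hcon
      have hxb : 3*ε/4 < x m := by linarith
      have hyb : y m < -(3*ε/4) := by linarith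
      have hmF : m ∈ F := (hth1 m hm).1 hxb
      have hmG' : m ∈ G' := (hth2 m hm).2 hyb
      have : m ∈ r.1 ∩ r.2 := ⟨he1.1 hmF, he2.2 hmG'⟩
      rw [hr.1] at this
      exact this

lemma s16_lp_sum_apply {ι : Type*} (s : Finset ι) (F : ι → Linfty) (m : ℕ) :
    (∑ i ∈ s, F i) m = ∑ i ∈ s, F i m := by
  induction s using Finset.induction_on with
  | empty => simp [lp.coeFn_zero]
  | insert _ _ h ih =>
    rw [Finset.sum_insert h, Finset.sum_insert h, ← ih]
    simp [lp.coeFn_add]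

lemma s16_exists {𝒜 : Set (Set ℕ)} (h𝒜 : ADFamily 𝒜) {P : ℕ → Set (Set ℕ × Set ℕ)}
    (hP : (⋃ n, P n) = {p | SplitCond 𝒜 p}) {ε : ℝ} (hε : 0 < ε) {x : Linfty}
    (hx : x ∈ sphereInf 𝒜) : ∃ d, S16Good 𝒜 P ε x d := by
  obtain ⟨hxX, hxn⟩ := hx
  have hδ : 0 < ε/8 := by positivity
  -- approximate `x` by an element of the span
  have hclos : x ∈ closure ((Submodule.span ℝ (c0Set ∪ indicatorLinfty '' 𝒜)
      : Submodule ℝ Linfty) : Set Linfty) := by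
    rw [← Submodule.topologicalClosure_coe]; exact hxX
  obtain ⟨y, hy_mem, hy_dist⟩ := Metric.mem_closure_iff.1 hclos (ε/8) hδ
  rw [dist_eq_norm] at hy_dist
  rw [SetLike.mem_coe, Submodule.span_union, Submodule.mem_sup] at hy_mem
  obtain ⟨c, hc_mem, z, hz_mem, hy_eq⟩ := hy_mem
  have hc0 : Tendsto (fun m => c m) atTop (nhds 0) := by
    have hle : Submodule.span ℝ c0Set ≤ s16c0 := Submodule.span_le.2 (fun v hv => hv)
    exact hle hc_mem
  obtain ⟨k, f, g, hz⟩ := Submodule.mem_span_set'.1 hz_mem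
  choose A hA𝒜 hAe using fun i => (Set.mem_image _ _ _).1 (g i).2
  have hz' : ∑ i, f i • indicatorLinfty (A i) = z := by
    simp_rw [hAe]; exact hz
  set a := Finset.univ.image A with ha_def
  have ha𝒜 : ↑a ⊆ 𝒜 := by
    intro B hB
    rw [Finset.mem_coe, ha_def, Finset.mem_image] at hB
    obtain ⟨i, _, rfl⟩ := hB
    exact hA𝒜 i
  set w : Set ℕ → ℝ := fun B => ∑ i ∈ Finset.univ.filter (fun i => A i = B), f i with hw
  have hzm : ∀ m, z m = ∑ i ∈ Finset.univ.filter (fun i => m ∈ A i), f i := by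
    intro m
    rw [← hz', s16_lp_sum_apply, Finset.sum_filter]
    refine Finset.sum_congr rfl fun i _ => ?_
    have h1 : (f i • indicatorLinfty (A i)) m = f i * (if m ∈ A i then (1:ℝ) else 0) := by
      rw [lp.coeFn_smul]
      simp [s16_indicator_apply]
    rw [h1]
    split <;> ring
  have hfiber : ∀ m, m ∉ s16Ov a → ∀ i₀, m ∈ A i₀ → z m = w (A i₀) := by
    intro m hm i₀ hi₀
    rw [hzm, hw]
    apply Finset.sum_congr _ (fun _ _ => rfl)
    apply Finset.filter_congr
    intro i _
    constructor
    · intro hmi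
      by_contra hne
      exact hm ⟨A i, Finset.mem_image_of_mem A (Finset.mem_univ i), A i₀,
        Finset.mem_image_of_mem A (Finset.mem_univ i₀), hne, hmi, hi₀⟩
    · intro h; rw [h]; exact hi₀
  have hzero : ∀ m, (∀ i, m ∉ A i) → z m = 0 := by
    intro m h
    rw [hzm, Finset.filter_false_of_mem (fun i _ => h i), Finset.sum_empty]
  -- tail bound on `c`
  obtain ⟨M, hM⟩ := Metric.tendsto_atTop.1 hc0 (ε/8) hδ
  have hE₀fin : (s16Ov a ∪ Set.Iio M).Finite := (s16_ov_finite h𝒜 ha𝒜).union (Set.finite_Iio M)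
  set Efin := hE₀fin.toFinset with hEfin_def
  set l : List (ℕ × ℚ) := Efin.toList.map (fun m => (m, (exists_rat_near (x m) hδ).choose))
    with hl_def
  have hlmem : ∀ mq ∈ l, |x mq.1 - (mq.2:ℝ)| ≤ ε/8 := by
    intro mq hmq
    rw [hl_def, List.mem_map] at hmq
    obtain ⟨m, _, rfl⟩ := hmq
    exact le_of_lt (exists_rat_near (x m) hδ).choose_spec
  have hlkey : ∀ m, m ∉ l.map Prod.fst → m ∉ s16Ov a ∧ M ≤ m := by
    intro m hm
    have hmE : m ∉ Efin := by
      intro hmE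
      apply hm
      rw [hl_def, List.map_map]
      exact List.mem_map.2 ⟨m, Finset.mem_toList.2 hmE, rfl⟩
    rw [hEfin_def, Set.Finite.mem_toFinset] at hmE
    exact ⟨fun h => hmE (Or.inl h), not_lt.1 fun h => hmE (Or.inr h)⟩
  -- coordinatewise estimate
  have hxz : ∀ m, M ≤ m → |x m - z m| ≤ ε/4 := by
    intro m hMm
    have h1 : |x m - y m| ≤ ε/8 := by
      have hco : (x - y) m = x m - y m := by rw [lp.coeFn_sub]; rfl
      have := s16_coord_abs_le (x - y) m
      rw [hco] at this
      linarith
    have h2 : |c m| < ε/8 := by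
      have := hM m hMm
      rwa [Real.dist_eq, sub_zero] at this
    have h3 : y m = c m + z m := by rw [← hy_eq, lp.coeFn_add]; rfl
    have h4 : x m - z m = (x m - y m) + c m := by rw [h3]; ring
    rw [h4]
    calc |(x m - y m) + c m| ≤ |x m - y m| + |c m| := abs_add_le _ _
      _ ≤ ε/4 := by linarith
  -- the condition
  set E₀ : Set ℕ := s16Ov a ∪ Set.Iio M with hE₀_def
  set aF := a.filter (fun B => ε/2 < w B) with haF_def
  set aG := a.filter (fun B => w B < -(ε/2)) with haG_def
  set F : Set ℕ := (⋃ B ∈ aF, B) \ E₀ with hF_def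
  set G : Set ℕ := (⋃ B ∈ aG, B) \ E₀ with hG_def
  have hdiffstar : ∀ (s : Finset (Set ℕ)), eqStar ((⋃ B ∈ s, B) \ E₀) (⋃ B ∈ s, B) := by
    intro s
    refine Set.Finite.subset hE₀fin ?_
    intro m hm
    rw [Set.mem_symmDiff] at hm
    rcases hm with ⟨⟨h1, _⟩, h2⟩ | ⟨h1, h2⟩
    · exact (h2 h1).elim
    · by_contra hE
      exact h2 ⟨h1, hE⟩
  have hcond : SplitCond 𝒜 (F, G) := by
    refine ⟨?_, aF, aG, ?_, ?_, hdiffstar aF, hdiffstar aG⟩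
    · ext m
      simp only [Set.mem_inter_iff, Set.mem_empty_iff_false, iff_false]
      rintro ⟨⟨hmF, hmE⟩, ⟨hmG, _⟩⟩
      simp only [Set.mem_iUnion] at hmF hmG
      obtain ⟨B, hB, hmB⟩ := hmF
      obtain ⟨B', hB', hmB'⟩ := hmG
      rw [haF_def, Finset.mem_filter] at hB
      rw [haG_def, Finset.mem_filter] at hB'
      have hne : B ≠ B' := by
        intro h
        rw [h] at hB
        linarith [hB.2, hB'.2]
      exact hmE (Or.inl ⟨B, hB.1, B', hB'.1, hne, hmB, hmB'⟩)
    · exact fun B hB => ha𝒜 (Finset.filter_subset _ _ hB)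
    · exact fun B hB => ha𝒜 (Finset.filter_subset _ _ hB)
  have hFGmem : (F, G) ∈ ⋃ n, P n := by rw [hP]; exact hcond
  obtain ⟨n, hn⟩ := Set.mem_iUnion.1 hFGmem
  refine ⟨(n, l), F, G, hcond, hn, hlmem, ?_⟩
  intro m hm
  obtain ⟨hov, hMm⟩ := hlkey m hm
  have hxzm := hxz m hMm
  rw [abs_le] at hxzm
  have hnE₀ : m ∉ E₀ := by
    rintro (h | h)
    · exact hov h
    · exact absurd hMm (not_le.2 h)
  constructor
  · intro hbig
    have hzm_big : ε/2 < z m := by linarith [hxzm.2]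
    have hex : ∃ i₀, m ∈ A i₀ := by
      by_contra h
      push_neg at h
      rw [hzero m h] at hzm_big
      linarith
    obtain ⟨i₀, hi₀⟩ := hex
    have hwzm : z m = w (A i₀) := hfiber m hov i₀ hi₀
    refine ⟨?_, hnE₀⟩
    simp only [Set.mem_iUnion]
    refine ⟨A i₀, ?_, hi₀⟩
    rw [haF_def, Finset.mem_filter]
    exact ⟨Finset.mem_image_of_mem A (Finset.mem_univ i₀), by rw [← hwzm]; exact hzm_big⟩
  · intro hsmall
    have hzm_small : z m < -(ε/2) := by linarith [hxzm.1]
    have hex : ∃ i₀, m ∈ A i₀ := by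
      by_contra h
      push_neg at h
      rw [hzero m h] at hzm_small
      linarith
    obtain ⟨i₀, hi₀⟩ := hex
    have hwzm : z m = w (A i₀) := hfiber m hov i₀ hi₀
    refine ⟨?_, hnE₀⟩
    simp only [Set.mem_iUnion]
    refine ⟨A i₀, ?_, hi₀⟩
    rw [haG_def, Finset.mem_filter]
    exact ⟨Finset.mem_image_of_mem A (Finset.mem_univ i₀), by rw [← hwzm]; exact hzm_small⟩

theorem statement16 (𝒜 : Set (Set ℕ)) (h𝒜 : ADFamily 𝒜) :
    SplitSigmaCentered 𝒜 ↔
      ∀ ε : ℝ, 0 < ε → ε < 1 →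
        ∃ X : ℕ → Set Linfty, sphereInf 𝒜 = ⋃ n, X n ∧
          ∀ n, ∀ x ∈ X n, ∀ y ∈ X n, ‖x - y‖ ≤ 1 + ε := by
  constructor
  · rintro ⟨P, hP1, hP2⟩ ε hε _
    have henc : Function.Injective (Encodable.encode : ℕ × List (ℕ × ℚ) → ℕ) :=
      Encodable.encode_injective
    set dfun : Linfty → ℕ × List (ℕ × ℚ) :=
      fun x => if h : ∃ d, S16Good 𝒜 P ε x d then h.choose else default with hdfun
    refine ⟨fun n => {x | x ∈ sphereInf 𝒜 ∧ Encodable.encode (dfun x) = n}, ?_, ?_⟩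
    · ext x
      simp only [Set.mem_iUnion, Set.mem_setOf_eq]
      exact ⟨fun hx => ⟨_, hx, rfl⟩, fun ⟨n, hx, _⟩ => hx⟩
    · intro n x hx y hy
      have hgood : ∀ u : Linfty, u ∈ sphereInf 𝒜 → S16Good 𝒜 P ε u (dfun u) := by
        intro u hu
        have h : ∃ d, S16Good 𝒜 P ε u d := s16_exists h𝒜 hP1 hε hu
        rw [hdfun]
        simp only [dif_pos h]
        exact h.choose_spec
      have hxy : dfun x = dfun y := henc (hx.2.trans hy.2.symm)
      exact s16_close hP2 hε hx.1.2 hy.1.2 (hgood x hx.1) (hxy ▸ hgood y hy.1)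
  · intro h
    obtain ⟨X, hX1, hX2⟩ := h 2⁻¹ (by norm_num) (by norm_num)
    exact s16_backward h𝒜 X hX1 hX2
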